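/- Let v' ∈ 𝔖 be a unit satisfying v' ≡ 1 modulo u (i.e. v' − 1 ∈ u·𝔖). Then there exists a unit v ∈ 𝔖 with v ≡ 1 modulo u such that v' = φ(v)·v^{−1}. (This is the 'simple exercise' used in the paper to normalize the generator of the Breuil–Kisin twist 𝔖{−1} so that φ(x) = d·x.) -/

import Mathlib

open PowerSeries Finset

noncomputable def stmt16Aux {R : Type*} [CommRing R] (p : ℕ) (hp : 2 ≤ p)
    (F : R → R) (c : ℕ → R) : ℕ → R
  | 0 => 1
  | (m+1) =>
      (if p ∣ (m+1) then F (stmt16Aux p hp F c ((m+1)/p)) else 0)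
        - ∑ j ∈ Finset.range (m+1), c (j+1) * stmt16Aux p hp F c (m - j)
  decreasing_by
    · exact Nat.div_lt_self (Nat.succ_pos m) hp
    · exact Nat.lt_succ_of_le (Nat.sub_le m j)

lemma stmt16_phi_coeff {R : Type*} [CommRing R] (p : ℕ) (hp : 1 ≤ p)
    (φ : PowerSeries R →+* PowerSeries R) (F : R →+* R)
    (hφu : φ PowerSeries.X = PowerSeries.X ^ p)
    (hφC : ∀ a : R, φ (PowerSeries.C a) = PowerSeries.C (F a))
    (f : PowerSeries R) (m : ℕ) :
    PowerSeries.coeff m (φ f)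
      = if p ∣ m then F (PowerSeries.coeff (m / p) f) else 0 := by
  set N := m + 1 with hN
  have hmN : m < p * N := lt_of_lt_of_le (Nat.lt_succ_self m) (Nat.le_mul_of_pos_left N hp)
  have hdvd : (PowerSeries.X : PowerSeries R) ^ N ∣
      (f - ∑ n ∈ Finset.range N, PowerSeries.C (PowerSeries.coeff n f)
        * PowerSeries.X ^ n) := by
    rw [PowerSeries.X_pow_dvd_iff]
    intro i hi
    rw [map_sub, map_sum]
    have h1 : ∀ n ∈ Finset.range N,
        PowerSeries.coeff i (PowerSeries.C (PowerSeries.coeff n f)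
          * PowerSeries.X ^ n)
        = if n = i then PowerSeries.coeff n f else 0 := by
      intro n _
      rw [PowerSeries.coeff_C_mul, PowerSeries.coeff_X_pow]
      by_cases h : i = n <;> simp [h, eq_comm]
    rw [Finset.sum_congr rfl h1, Finset.sum_ite_eq' (Finset.range N) i
      (fun n => PowerSeries.coeff n f), if_pos (Finset.mem_range.mpr hi), sub_self]
  obtain ⟨g, hg⟩ := hdvd
  have hf : f = (∑ n ∈ Finset.range N, PowerSeries.C (PowerSeries.coeff n f)
      * PowerSeries.X ^ n) + PowerSeries.X ^ N * g := by
    rw [← hg]; ring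
  have hφf : φ f = (∑ n ∈ Finset.range N, PowerSeries.C (F (PowerSeries.coeff n f))
      * PowerSeries.X ^ (p * n)) + PowerSeries.X ^ (p * N) * φ g := by
    conv_lhs => rw [hf]
    rw [map_add, map_sum, map_mul, map_pow, hφu, ← pow_mul]
    congr 1
    refine Finset.sum_congr rfl fun n _ => ?_
    rw [map_mul, map_pow, hφu, hφC, ← pow_mul]
  rw [hφf, map_add, map_sum]
  have h2 : PowerSeries.coeff m (PowerSeries.X ^ (p * N) * φ g) = 0 := by
    have hd : (PowerSeries.X : PowerSeries R) ^ (p * N) ∣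
        PowerSeries.X ^ (p * N) * φ g := ⟨φ g, rfl⟩
    rw [PowerSeries.X_pow_dvd_iff] at hd
    exact hd m hmN
  rw [h2, add_zero]
  have hterm : ∀ n ∈ Finset.range N,
      PowerSeries.coeff m (PowerSeries.C (F (PowerSeries.coeff n f))
        * PowerSeries.X ^ (p * n))
      = if m = p * n then F (PowerSeries.coeff n f) else 0 := by
    intro n _
    rw [PowerSeries.coeff_C_mul, PowerSeries.coeff_X_pow]
    by_cases h : m = p * n <;> simp [h]
  rw [Finset.sum_congr rfl hterm]
  by_cases hpm : p ∣ m
  · obtain ⟨q, hq⟩ := hpm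
    have hqN : q < N := by
      by_contra h
      push_neg at h
      exact absurd hmN (by rw [hq]; exact not_lt.mpr (Nat.mul_le_mul_left p h))
    have hq' : m / p = q := by rw [hq]; exact Nat.mul_div_cancel_left q hp
    rw [Finset.sum_eq_single q]
    · rw [if_pos hq, if_pos ⟨q, hq⟩, hq']
    · intro b _ hb
      have hne : m ≠ p * b := fun h => hb (Nat.eq_of_mul_eq_mul_left hp (hq.symm.trans h)).symm
      simp [hne]
    · intro h; exact absurd (Finset.mem_range.mpr hqN) h
  · rw [if_neg hpm]
    refine Finset.sum_eq_zero fun n _ => ?_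
    have hne : m ≠ p * n := fun h => hpm ⟨n, h⟩
    simp [hne]

/-- The "simple exercise" used in Proposition 6.2: let `𝔖 = W(k)⟦u⟧` with Frobenius lift `φ`.
If `v' ∈ 𝔖ˣ` is a unit with `v' ≡ 1 (mod u)`, then there is a unit `v ∈ 𝔖ˣ` with `v ≡ 1 (mod u)`
such that `v' = φ(v)·v⁻¹`, i.e. `v' · v = φ(v)`. -/
theorem stmt16 (p : ℕ) [Fact p.Prime] (k : Type*) [Field k] [CharP k p] [PerfectField k]
    (φ : PowerSeries (WittVector p k) →+* PowerSeries (WittVector p k))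
    (hφu : φ PowerSeries.X = PowerSeries.X ^ p)
    (hφC : ∀ a : WittVector p k,
      φ (PowerSeries.C a) = PowerSeries.C (WittVector.frobenius a))
    (v' : PowerSeries (WittVector p k)) (hv' : IsUnit v')
    (hcong : v' - 1 ∈ Ideal.span {(PowerSeries.X : PowerSeries (WittVector p k))}) :
    ∃ v : PowerSeries (WittVector p k), IsUnit v ∧
      v - 1 ∈ Ideal.span {(PowerSeries.X : PowerSeries (WittVector p k))} ∧
      v' * v = φ v := by
  have hp2 : 2 ≤ p := (Fact.out : p.Prime).two_le
  have hp1 : 1 ≤ p := le_trans (by norm_num) hp2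
  set F : WittVector p k →+* WittVector p k := WittVector.frobenius with hF
  set c : ℕ → WittVector p k := fun n => PowerSeries.coeff n v' with hc
  have hc0 : c 0 = 1 := by
    rw [Ideal.mem_span_singleton, PowerSeries.X_dvd_iff, map_sub, map_one, sub_eq_zero] at hcong
    simpa [hc, PowerSeries.coeff_zero_eq_constantCoeff] using hcong
  set a : ℕ → WittVector p k := stmt16Aux p hp2 F c with ha
  set v : PowerSeries (WittVector p k) := PowerSeries.mk a with hv
  have hcoeffv : ∀ n, PowerSeries.coeff n v = a n := fun n => PowerSeries.coeff_mk n a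
  have ha0 : a 0 = 1 := by rw [ha, stmt16Aux]
  refine ⟨v, ?_, ?_, ?_⟩
  · rw [PowerSeries.isUnit_iff_constantCoeff, ← PowerSeries.coeff_zero_eq_constantCoeff_apply,
      hcoeffv, ha0]
    exact isUnit_one
  · rw [Ideal.mem_span_singleton, PowerSeries.X_dvd_iff, map_sub, map_one,
      ← PowerSeries.coeff_zero_eq_constantCoeff_apply, hcoeffv, ha0, sub_self]
  · refine PowerSeries.ext fun m => ?_
    rw [stmt16_phi_coeff p hp1 φ F hφu hφC v m, hcoeffv, PowerSeries.coeff_mul]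
    rcases m with _ | n
    · simp only [Finset.Nat.antidiagonal_zero, Finset.sum_singleton]
      rw [hcoeffv, if_pos (dvd_zero p), Nat.zero_div, ha0, map_one, mul_one]
      exact hc0
    · have lhs_eq : ∑ ij ∈ Finset.HasAntidiagonal.antidiagonal (n + 1),
          PowerSeries.coeff ij.1 v' * PowerSeries.coeff ij.2 v
          = a (n + 1) + ∑ j ∈ Finset.range (n + 1), c (j + 1) * a (n - j) := by
        rw [Finset.Nat.sum_antidiagonal_eq_sum_range_succ_mk, Finset.sum_range_succ']
        simp only [Nat.sub_zero, Nat.succ_sub_succ, hcoeffv]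
        rw [add_comm]
        congr 1
        show c 0 * a (n + 1) = a (n + 1)
        rw [hc0, one_mul]
      rw [lhs_eq]
      have hrec : a (n + 1) = (if p ∣ (n + 1) then F (a ((n + 1) / p)) else 0)
          - ∑ j ∈ Finset.range (n + 1), c (j + 1) * a (n - j) := by
        conv_lhs => rw [ha, stmt16Aux]
      rw [hrec]
      ring
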